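/- Suppose the m×n real matrix α is nonsingular in the Diophantine sense: it is NOT the case that for every ε > 0 there exists Q_ε ≥ 1 such that for all Q ≥ Q_ε there exists (p,q) ∈ ℤ^m × ℤ^n with ‖αq + p‖ ≤ ε Q^{−n/m} and 0 < ‖q‖ ≤ Q. Then there exists ε > 0 such that for infinitely many Q in {2^k : k ∈ ℕ}, the only point of the dual lattice Λ_Q* = ((g_Q u_α)^T)^{−1} ℤ^{m+n} in the box {(p,q) : ‖p‖ ≤ 2ε, ‖q‖ ≤ 2C₁} is the origin, for any fixed constant C₁ ≥ 1. -/

import Mathlib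

/-- The Euclidean norm of a vector in `Fin k → ℝ`. -/
noncomputable def euclNorm {k : ℕ} (v : Fin k → ℝ) : ℝ :=
  Real.sqrt (∑ i, (v i) ^ 2)

lemma euclNorm_nonneg {k : ℕ} (v : Fin k → ℝ) : 0 ≤ euclNorm v := Real.sqrt_nonneg _

lemma euclNorm_mul_left {k : ℕ} (t : ℝ) (v : Fin k → ℝ) :
    euclNorm (fun i => t * v i) = |t| * euclNorm v := by
  unfold euclNorm
  rw [← Real.sqrt_sq_eq_abs, ← Real.sqrt_mul (sq_nonneg t), Finset.mul_sum]
  congr 1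
  exact Finset.sum_congr rfl fun i _ => by ring

lemma abs_le_euclNorm {k : ℕ} (v : Fin k → ℝ) (j : Fin k) : |v j| ≤ euclNorm v := by
  unfold euclNorm
  rw [← Real.sqrt_sq_eq_abs]
  exact Real.sqrt_le_sqrt (Finset.single_le_sum (fun i _ => sq_nonneg (v i)) (Finset.mem_univ j))

lemma one_le_euclNorm_int {k : ℕ} {z : Fin k → ℤ} (hz : z ≠ 0) :
    1 ≤ euclNorm fun i => (z i : ℝ) := by
  obtain ⟨j, hj⟩ : ∃ j, z j ≠ 0 := by
    by_contra h; push_neg at h; exact hz (funext h)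
  have h1 : (1 : ℝ) ≤ |(z j : ℝ)| := by
    have := Int.one_le_abs hj
    exact_mod_cast this
  exact h1.trans (abs_le_euclNorm (fun i => (z i : ℝ)) j)

lemma sq_euclNorm {k : ℕ} (v : Fin k → ℝ) : euclNorm v ^ 2 = ∑ i, v i ^ 2 :=
  Real.sq_sqrt (Finset.sum_nonneg fun i _ => sq_nonneg _)

lemma sqrt_sq_add_sq_le {a b : ℝ} (ha : 0 ≤ a) (hb : 0 ≤ b) :
    Real.sqrt (a ^ 2 + b ^ 2) ≤ a + b := by
  rw [show a + b = Real.sqrt ((a+b)^2) by rw [Real.sqrt_sq (by linarith)]]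
  apply Real.sqrt_le_sqrt; nlinarith

set_option maxHeartbeats 1000000 in
theorem mink_step (m n : ℕ) (hm : 0 < m) (hn : 0 < n) (α : Matrix (Fin m) (Fin n) ℝ)
    (ε₁ Q : ℝ) (hε₁ : 0 < ε₁) (hε₁' : ε₁ ≤ 1/2) (hQ : 1 ≤ Q)
    (p : Fin m → ℤ) (q : Fin n → ℤ) (hp : p ≠ 0)
    (hw : euclNorm (fun i => (Q ^ ((n:ℝ)/(m:ℝ)))⁻¹ * (p i : ℝ)) +
        euclNorm (fun j => Q * ((q j : ℝ) - α.transpose.mulVec (fun i => (p i : ℝ)) j))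
        ≤ (2 * (ε₁ / (2 * Real.sqrt (m+n))))^(m+n-1) / 2^(m+n+1)) :
    ∃ (p' : Fin m → ℤ) (q' : Fin n → ℤ),
      euclNorm (α.mulVec (fun j => (q' j : ℝ)) + fun i => (p' i : ℝ)) ≤
        (ε₁/2) * Q ^ (-(n:ℝ)/(m:ℝ)) ∧
      0 < euclNorm (fun j => (q' j : ℝ)) ∧ euclNorm (fun j => (q' j : ℝ)) ≤ Q := by
  classical
  have hm' : (0:ℝ) < m := by exact_mod_cast hm
  have hn' : (0:ℝ) < n := by exact_mod_cast hn
  have hQ0 : (0:ℝ) < Q := lt_of_lt_of_le one_pos hQ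
  set na : ℝ := (n:ℝ)/(m:ℝ) with hna
  have hna0 : 0 < na := div_pos hn' hm'
  set Qm : ℝ := Q ^ na with hQm
  have hQm1 : 1 ≤ Qm := Real.one_le_rpow hQ hna0.le
  have hQm0 : (0:ℝ) < Qm := lt_of_lt_of_le one_pos hQm1
  set d : ℕ := m + n with hd
  have hd0 : 0 < d := by omega
  have hsd : 0 < Real.sqrt ((m:ℝ) + n) := Real.sqrt_pos.mpr (by positivity)
  set cc : ℝ := ε₁ / (2 * Real.sqrt ((m:ℝ)+n)) with hcc
  have hcc0 : 0 < cc := by positivity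
  -- the dual vector
  set w : (Fin m ⊕ Fin n) → ℝ := Sum.elim (fun i => Qm⁻¹ * (p i : ℝ))
    (fun j => Q * ((q j : ℝ) - α.transpose.mulVec (fun i => (p i : ℝ)) j)) with hwdef
  set wE : EuclideanSpace ℝ (Fin m ⊕ Fin n) := (WithLp.equiv 2 _).symm w with hwE
  have hwE_app : ∀ i, wE i = w i := fun i => rfl
  have hwEnorm : ‖wE‖ = Real.sqrt (∑ i, w i ^ 2) := by
    rw [EuclideanSpace.norm_eq]
    congr 1
    exact Finset.sum_congr rfl fun i _ => by rw [hwE_app, Real.norm_eq_abs, sq_abs]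
  have hwEle : ‖wE‖ ≤ (2 * cc)^(d-1) / 2^(d+1) := by
    rw [hwEnorm]
    have hsum : ∑ i, w i ^ 2 =
        (euclNorm (fun i => Qm⁻¹ * (p i : ℝ)))^2 +
        (euclNorm (fun j => Q * ((q j : ℝ) - α.transpose.mulVec (fun i => (p i : ℝ)) j)))^2 := by
      rw [sq_euclNorm, sq_euclNorm, Fintype.sum_sum_type]
      simp [hwdef]
    rw [hsum]
    refine le_trans (sqrt_sq_add_sq_le (euclNorm_nonneg _) (euclNorm_nonneg _)) ?_
    exact hw
  have hw0 : wE ≠ 0 := by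
    obtain ⟨i, hi⟩ : ∃ i, p i ≠ 0 := by
      by_contra h; push_neg at h; exact hp (funext h)
    intro h0
    have : wE (Sum.inl i) = 0 := by rw [h0]; rfl
    rw [hwE_app] at this
    simp only [hwdef, Sum.elim_inl] at this
    rcases mul_eq_zero.mp this with h | h
    · exact (inv_ne_zero hQm0.ne') h
    · exact hi (by exact_mod_cast h)
  have hnw0 : 0 < ‖wE‖ := norm_pos_iff.mpr hw0
  -- orthonormal basis containing the direction of w
  set u : EuclideanSpace ℝ (Fin m ⊕ Fin n) := ‖wE‖⁻¹ • wE with hu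
  have hu1 : ‖u‖ = 1 := by
    rw [hu, norm_smul, norm_inv, norm_norm, inv_mul_cancel₀ hnw0.ne']
  set i₀ : Fin m ⊕ Fin n := Sum.inl ⟨0, hm⟩ with hi₀
  obtain ⟨b, hb⟩ : ∃ b : OrthonormalBasis (Fin m ⊕ Fin n) ℝ (EuclideanSpace ℝ (Fin m ⊕ Fin n)),
      ∀ i ∈ ({i₀} : Set (Fin m ⊕ Fin n)), b i = (fun _ => u) i := by
    apply Orthonormal.exists_orthonormalBasis_extension_of_card_eq (𝕜 := ℝ)
    · rw [finrank_euclideanSpace]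
    · constructor
      · intro i; exact hu1
      · intro i j hij
        exfalso
        exact hij (Subsingleton.elim i j)
  have hbi₀ : b i₀ = u := hb i₀ rfl
  -- the lattice basis
  set B : Matrix (Fin m ⊕ Fin n) (Fin m ⊕ Fin n) ℝ :=
    Matrix.fromBlocks (Qm • 1) (Qm • α) 0 (Q⁻¹ • 1) with hB
  have hdetB : B.det = 1 := by
    rw [hB, Matrix.det_fromBlocks_zero₂₁, Matrix.det_smul, Matrix.det_smul]
    simp only [Matrix.det_one, mul_one, Fintype.card_fin]
    have h1 : Qm ^ m = Q ^ (n:ℕ) := by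
      rw [hQm, ← Real.rpow_natCast (Q ^ na) m, ← Real.rpow_mul hQ0.le, hna,
        div_mul_cancel₀ _ hm'.ne', Real.rpow_natCast]
    rw [h1, inv_pow, mul_inv_cancel₀ (pow_ne_zero _ hQ0.ne')]
  have hInvB : Invertible B := B.invertibleOfIsUnitDet (by rw [hdetB]; exact isUnit_one)
  set c : Module.Basis (Fin m ⊕ Fin n) ℝ ((Fin m ⊕ Fin n) → ℝ) :=
    (Pi.basisFun ℝ (Fin m ⊕ Fin n)).map (B.toLinearEquiv' hInvB) with hc
  have hcj : ∀ jj, c jj = fun ii => B ii jj := by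
    intro jj
    rw [hc, Module.Basis.map_apply, Pi.basisFun_apply]
    have : (B.toLinearEquiv' hInvB) (Pi.single jj 1) = B.mulVec (Pi.single jj 1) := rfl
    rw [this, Matrix.mulVec_single_one]
    funext ii
    exact Matrix.transpose_apply _ _ _
  have hFD : MeasureTheory.volume (ZSpan.fundamentalDomain c) = 1 := by
    rw [ZSpan.volume_fundamentalDomain]
    have hM : (Matrix.of ⇑c) = B.transpose := by
      ext ii jj
      rw [Matrix.of_apply, hcj ii, Matrix.transpose_apply]
    rw [hM, Matrix.det_transpose, hdetB]
    simp
  -- the cylinder body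
  set g : (Fin m ⊕ Fin n) → ℝ := fun i => if i = i₀ then (2*‖wE‖)⁻¹ else cc with hg
  set piS : Set ((Fin m ⊕ Fin n) → ℝ) := Set.univ.pi fun i => Set.Icc (-(g i)) (g i) with hpiS
  set M : ((Fin m ⊕ Fin n) → ℝ) → ((Fin m ⊕ Fin n) → ℝ) :=
    fun x => fun i => b.repr ((WithLp.equiv 2 _).symm x) i with hMdef
  set C : Set ((Fin m ⊕ Fin n) → ℝ) := M ⁻¹' piS with hC
  have hgi₀ : g i₀ = (2*‖wE‖)⁻¹ := if_pos rfl
  have hCmem : ∀ x, x ∈ C ↔ ∀ i, |b.repr ((WithLp.equiv 2 _).symm x) i| ≤ g i := by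
    intro x
    simp only [hC, Set.mem_preimage, hpiS, Set.mem_pi, Set.mem_univ, forall_true_left,
      Set.mem_Icc, hMdef]
    constructor
    · intro h i; rcases h i with ⟨h1, h2⟩; exact abs_le.mpr ⟨h1, h2⟩
    · intro h i; exact abs_le.mp (h i)
  have hMlin : IsLinearMap ℝ M := by
    constructor
    · intro x y; funext i
      simp only [hMdef]
      have : (WithLp.equiv 2 ((Fin m ⊕ Fin n) → ℝ)).symm (x + y)
          = (WithLp.equiv 2 _).symm x + (WithLp.equiv 2 _).symm y := rfl
      rw [this, map_add]; rfl
    · intro t x; funext i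
      simp only [hMdef]
      have : (WithLp.equiv 2 ((Fin m ⊕ Fin n) → ℝ)).symm (t • x)
          = t • (WithLp.equiv 2 _).symm x := rfl
      rw [this, map_smul]; rfl
  have hconv : Convex ℝ C := by
    have h1 : Convex ℝ piS := convex_pi (fun i _ => convex_Icc _ _)
    exact h1.is_linear_preimage hMlin
  have hsymm : ∀ x ∈ C, -x ∈ C := by
    intro x hx
    rw [hCmem] at hx ⊢
    intro i
    have : (WithLp.equiv 2 ((Fin m ⊕ Fin n) → ℝ)).symm (-x)
        = -((WithLp.equiv 2 _).symm x) := rfl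
    rw [this, map_neg]
    simpa using hx i
  have hμC : MeasureTheory.volume C = ∏ i, MeasureTheory.volume (Set.Icc (-(g i)) (g i)) := by
    have hMP : MeasureTheory.MeasurePreserving M MeasureTheory.volume MeasureTheory.volume := by
      have h1 := (EuclideanSpace.volume_preserving_symm_measurableEquiv_toLp (Fin m ⊕ Fin n)).symm
      have h2 := b.measurePreserving_repr
      have h3 := EuclideanSpace.volume_preserving_symm_measurableEquiv_toLp (Fin m ⊕ Fin n)
      have h4 := (h3.comp h2).comp h1
      exact h4
    rw [hC, hMP.measure_preimage
      ((MeasurableSet.univ_pi fun i => measurableSet_Icc).nullMeasurableSet),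
      MeasureTheory.volume_pi_pi]
  have hfinrank : Module.finrank ℝ ((Fin m ⊕ Fin n) → ℝ) = d := by
    rw [Module.finrank_fintype_fun_eq_card, Fintype.card_sum, Fintype.card_fin, Fintype.card_fin]
  have hvol : MeasureTheory.volume (ZSpan.fundamentalDomain c) *
      2 ^ Module.finrank ℝ ((Fin m ⊕ Fin n) → ℝ) < MeasureTheory.volume C := by
    rw [hFD, one_mul, hμC, hfinrank]
    have hIcc : ∀ i, MeasureTheory.volume (Set.Icc (-(g i)) (g i)) = ENNReal.ofReal (2 * g i) := by
      intro i
      rw [Real.volume_Icc]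
      congr 1
      ring
    simp only [hIcc]
    rw [← Finset.mul_prod_erase Finset.univ _ (Finset.mem_univ i₀)]
    have herase : ∏ i ∈ Finset.univ.erase i₀, ENNReal.ofReal (2 * g i)
        = ENNReal.ofReal (2 * cc) ^ (d - 1) := by
      have hgval : ∀ i ∈ Finset.univ.erase i₀, ENNReal.ofReal (2 * g i)
          = ENNReal.ofReal (2*cc) := by
        intro i hi
        have hgi : g i = cc := by
          simp only [hg]
          exact if_neg (Finset.ne_of_mem_erase hi)
        rw [hgi]
      rw [Finset.prod_congr rfl hgval, Finset.prod_const,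
        Finset.card_erase_of_mem (Finset.mem_univ i₀), Finset.card_univ,
        Fintype.card_sum, Fintype.card_fin, Fintype.card_fin]
    rw [herase, hgi₀, ← ENNReal.ofReal_pow (by positivity), ← ENNReal.ofReal_mul (by positivity)]
    have h2d : (2:ENNReal) ^ d = ENNReal.ofReal ((2:ℝ) ^ d) := by
      rw [ENNReal.ofReal_pow (by norm_num)]
      norm_num
    rw [h2d]
    rw [ENNReal.ofReal_lt_ofReal_iff (by positivity)]
    -- real inequality
    have hkey : ‖wE‖ * 2^(d+1) ≤ (2*cc)^(d-1) := by
      rw [← le_div_iff₀ (by positivity)]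
      exact hwEle
    have h1 : (2:ℝ)^(d+1) ≤ 2 * (2*‖wE‖)⁻¹ * (2*cc)^(d-1) := by
      have ha : 2 * (2*‖wE‖)⁻¹ * (2*cc)^(d-1) = ‖wE‖⁻¹ * (2*cc)^(d-1) := by
        field_simp
      rw [ha, ← inv_mul_cancel_left₀ hnw0.ne' ((2:ℝ)^(d+1))]
      exact mul_le_mul_of_nonneg_left hkey (by positivity)
    calc (2:ℝ)^d < 2^(d+1) := by
          apply pow_lt_pow_right₀ (by norm_num) (by omega)
    _ ≤ _ := h1
  -- Minkowski's convex body theorem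
  haveI : Countable ↥(Submodule.span ℤ (Set.range ⇑c)).toAddSubgroup :=
    (inferInstance : Countable (Submodule.span ℤ (Set.range ⇑c)))
  obtain ⟨xL, hxL0, hxC⟩ :=
    MeasureTheory.exists_ne_zero_mem_lattice_of_measure_mul_two_pow_lt_measure
      (ZSpan.isAddFundamentalDomain' c MeasureTheory.volume) hsymm hconv hvol
  set x : (Fin m ⊕ Fin n) → ℝ := (xL : (Fin m ⊕ Fin n) → ℝ) with hx
  have hxmem : x ∈ Submodule.span ℤ (Set.range ⇑c) := ((Submodule.span ℤ (Set.range ⇑c)).mem_toAddSubgroup).mp xL.2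
  have hx0 : x ≠ 0 := by
    intro h
    exact hxL0 (by exact_mod_cast (ZeroMemClass.coe_eq_zero).mp h)
  -- integer coordinates
  choose z hz using (c.mem_span_iff_repr_mem ℤ x).mp hxmem
  set zp : Fin m → ℤ := fun i => z (Sum.inl i) with hzp
  set zq : Fin n → ℤ := fun j => z (Sum.inr j) with hzq
  have hxval : ∀ i0, x i0 = ∑ jj, (z jj : ℝ) * B i0 jj := by
    intro i0
    conv_lhs => rw [← c.sum_repr x]
    rw [Finset.sum_apply]
    refine Finset.sum_congr rfl fun jj _ => ?_
    rw [Pi.smul_apply, ← hz jj, hcj jj]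
    simp [smul_eq_mul]
  have hxinl : ∀ i, x (Sum.inl i) =
      Qm * ((zp i : ℝ) + ∑ j, α i j * (zq j : ℝ)) := by
    intro i
    rw [hxval, Fintype.sum_sum_type]
    have h₁ : ∑ i', (z (Sum.inl i') : ℝ) * B (Sum.inl i) (Sum.inl i')
        = Qm * (zp i : ℝ) := by
      rw [Finset.sum_eq_single i]
      · simp [hB, Matrix.one_apply]
        ring
      · intro i' _ hne
        simp [hB, Matrix.one_apply, (Ne.symm hne)]
      · intro h; exact absurd (Finset.mem_univ i) h
    have h₂ : ∑ j, (z (Sum.inr j) : ℝ) * B (Sum.inl i) (Sum.inr j)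
        = ∑ j, Qm * (α i j * (zq j : ℝ)) := by
      refine Finset.sum_congr rfl fun j _ => ?_
      simp [hB]
      ring
    rw [h₁, h₂, mul_add, Finset.mul_sum]
  have hxinr : ∀ j, x (Sum.inr j) = Q⁻¹ * (zq j : ℝ) := by
    intro j
    rw [hxval, Fintype.sum_sum_type]
    have h₁ : ∑ i', (z (Sum.inl i') : ℝ) * B (Sum.inr j) (Sum.inl i') = 0 := by
      refine Finset.sum_eq_zero fun i' _ => ?_
      simp [hB]
    have h₂ : ∑ j', (z (Sum.inr j') : ℝ) * B (Sum.inr j) (Sum.inr j')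
        = Q⁻¹ * (zq j : ℝ) := by
      rw [Finset.sum_eq_single j]
      · simp [hB, Matrix.one_apply]
        ring
      · intro j' _ hne
        simp [hB, Matrix.one_apply, (Ne.symm hne)]
      · intro h; exact absurd (Finset.mem_univ j) h
    rw [h₁, h₂, zero_add]
  -- the pairing with w is an integer
  have hαt : ∀ j, α.transpose.mulVec (fun i => (p i : ℝ)) j = ∑ i, α i j * (p i : ℝ) := by
    intro j
    simp [Matrix.mulVec, dotProduct, Matrix.transpose_apply]
  have hip : ∑ i, w i * x i = ((∑ i, p i * zp i + ∑ j, q j * zq j : ℤ) : ℝ) := by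
    rw [Fintype.sum_sum_type]
    have hterm1 : ∀ i, w (Sum.inl i) * x (Sum.inl i)
        = (p i : ℝ) * ((zp i : ℝ) + ∑ j, α i j * (zq j : ℝ)) := by
      intro i
      rw [hxinl]
      simp only [hwdef, Sum.elim_inl]
      rw [show Qm⁻¹ * (p i : ℝ) * (Qm * ((zp i : ℝ) + ∑ j, α i j * (zq j : ℝ)))
          = (Qm⁻¹ * Qm) * ((p i : ℝ) * ((zp i : ℝ) + ∑ j, α i j * (zq j : ℝ))) by ring,
        inv_mul_cancel₀ hQm0.ne', one_mul]
    have hterm2 : ∀ j, w (Sum.inr j) * x (Sum.inr j)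
        = ((q j : ℝ) - ∑ i, α i j * (p i : ℝ)) * (zq j : ℝ) := by
      intro j
      rw [hxinr]
      simp only [hwdef, Sum.elim_inr]
      rw [hαt]
      rw [show Q * ((q j : ℝ) - ∑ i, α i j * (p i : ℝ)) * (Q⁻¹ * (zq j : ℝ))
          = (Q * Q⁻¹) * (((q j : ℝ) - ∑ i, α i j * (p i : ℝ)) * (zq j : ℝ)) by ring,
        mul_inv_cancel₀ hQ0.ne', one_mul]
    rw [Finset.sum_congr rfl fun i _ => hterm1 i, Finset.sum_congr rfl fun j _ => hterm2 j]
    have hswap : ∑ i, (p i : ℝ) * ∑ j, α i j * (zq j : ℝ)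
        = ∑ j, (∑ i, α i j * (p i : ℝ)) * (zq j : ℝ) := by
      simp only [Finset.mul_sum, Finset.sum_mul]
      rw [Finset.sum_comm]
      refine Finset.sum_congr rfl fun j _ => Finset.sum_congr rfl fun i _ => by ring
    simp only [mul_add, sub_mul]
    rw [Finset.sum_add_distrib, Finset.sum_sub_distrib, hswap]
    push_cast
    ring
  -- inner product expressions
  set xE : EuclideanSpace ℝ (Fin m ⊕ Fin n) := (WithLp.equiv 2 _).symm x with hxEdef
  have hxCi := (hCmem x).mp hxC
  have hinner : (inner ℝ wE xE : ℝ) = ∑ i, w i * x i := by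
    rw [PiLp.inner_apply]
    refine Finset.sum_congr rfl fun i _ => ?_
    simp only [RCLike.inner_apply, starRingEnd_apply, star_trivial]
    exact mul_comm _ _
  have hrepr : (inner ℝ wE xE : ℝ) = ‖wE‖ * (b.repr xE i₀) := by
    have hw_eq : wE = ‖wE‖ • u := by
      rw [hu, smul_smul, mul_inv_cancel₀ hnw0.ne', one_smul]
    conv_lhs => rw [hw_eq]
    rw [real_inner_smul_left]
    congr 1
    rw [OrthonormalBasis.repr_apply_apply, hbi₀]
  have habs : |(inner ℝ wE xE : ℝ)| ≤ 1/2 := by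
    rw [hrepr, abs_mul, abs_of_pos hnw0]
    have h := hxCi i₀
    rw [hgi₀] at h
    calc ‖wE‖ * |b.repr xE i₀| ≤ ‖wE‖ * (2*‖wE‖)⁻¹ :=
        mul_le_mul_of_nonneg_left h hnw0.le
    _ = 1/2 := by
        field_simp
  have hz₀ : (∑ i, p i * zp i + ∑ j, q j * zq j : ℤ) = 0 := by
    by_contra h
    have h1 : (1:ℝ) ≤ |((∑ i, p i * zp i + ∑ j, q j * zq j : ℤ) : ℝ)| := by
      have := Int.one_le_abs h
      exact_mod_cast this
    rw [← hip, ← hinner] at h1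
    linarith
  have hreprzero : b.repr xE i₀ = 0 := by
    have h0 : (inner ℝ wE xE : ℝ) = 0 := by
      rw [hinner, hip, hz₀]; simp
    rw [hrepr] at h0
    exact (mul_eq_zero.mp h0).resolve_left hnw0.ne'
  -- the norm of x is small
  have hxnorm : Real.sqrt (∑ i, x i ^ 2) ≤ ε₁ / 2 := by
    have h1 : Real.sqrt (∑ i, x i ^ 2) = ‖xE‖ := by
      rw [EuclideanSpace.norm_eq]
      congr 1
      exact Finset.sum_congr rfl fun i _ => by rw [Real.norm_eq_abs, sq_abs]; rfl
    rw [h1, show ‖xE‖ = ‖b.repr xE‖ from (b.repr.norm_map xE).symm, EuclideanSpace.norm_eq]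
    have hbound : ∀ i, ‖b.repr xE i‖ ^ 2 ≤ cc ^ 2 := by
      intro i
      by_cases hii : i = i₀
      · rw [hii, hreprzero]
        simp [hcc0.le]
      · have h := hxCi i
        have hgi : g i = cc := by
          simp only [hg]; exact if_neg hii
        rw [hgi] at h
        rw [Real.norm_eq_abs]
        exact pow_le_pow_left₀ (abs_nonneg _) h 2
    calc Real.sqrt (∑ i, ‖b.repr xE i‖ ^ 2)
        ≤ Real.sqrt (∑ _i : Fin m ⊕ Fin n, cc ^ 2) :=
          Real.sqrt_le_sqrt (Finset.sum_le_sum fun i _ => hbound i)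
    _ = Real.sqrt ((d : ℝ) * cc ^ 2) := by
        rw [Finset.sum_const, Finset.card_univ, Fintype.card_sum, Fintype.card_fin,
          Fintype.card_fin, nsmul_eq_mul]
    _ = Real.sqrt (d : ℝ) * cc := by
        rw [Real.sqrt_mul (by positivity), Real.sqrt_sq hcc0.le]
    _ ≤ ε₁ / 2 := by
        have hds : Real.sqrt (d : ℝ) = Real.sqrt ((m:ℝ) + n) := by
          congr 1
          push_cast [hd]
          ring
        rw [hds, hcc]
        rw [show Real.sqrt ((m:ℝ)+n) * (ε₁ / (2 * Real.sqrt ((m:ℝ)+n))) = ε₁/2 *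
          (Real.sqrt ((m:ℝ)+n) / Real.sqrt ((m:ℝ)+n)) by ring, div_self hsd.ne', mul_one]
  have hxabs : ∀ i0, |x i0| ≤ ε₁ / 2 := by
    intro i0
    refine le_trans ?_ hxnorm
    rw [← Real.sqrt_sq_eq_abs]
    exact Real.sqrt_le_sqrt (Finset.single_le_sum (f := fun i => x i ^ 2)
      (fun _ _ => sq_nonneg _) (Finset.mem_univ i0))
  -- the q-part is nonzero
  have hzq0 : zq ≠ 0 := by
    intro hzqz
    have hq0 : ∀ j, (zq j : ℝ) = 0 := fun j => by rw [congrFun hzqz j]; simp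
    obtain ⟨i, hi⟩ : ∃ i, zp i ≠ 0 := by
      by_contra h
      push_neg at h
      apply hx0
      funext i0
      cases i0 with
      | inl i =>
          rw [hxinl]
          simp [h i, hq0]
      | inr j =>
          rw [hxinr, hq0 j, mul_zero]
          rfl
    have h1 : (1:ℝ) ≤ |x (Sum.inl i)| := by
      rw [hxinl]
      have hsum0 : ∑ j, α i j * (zq j : ℝ) = 0 :=
        Finset.sum_eq_zero fun j _ => by rw [hq0 j, mul_zero]
      rw [hsum0, add_zero, abs_mul, abs_of_pos hQm0]
      have hzpi : (1:ℝ) ≤ |(zp i : ℝ)| := by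
        have := Int.one_le_abs hi
        exact_mod_cast this
      nlinarith [hQm1, abs_nonneg ((zp i : ℝ))]
    have h2 := hxabs (Sum.inl i)
    linarith
  -- conclusion
  refine ⟨zp, zq, ?_, ?_, ?_⟩
  · have heq : (α.mulVec (fun j => (zq j : ℝ)) + fun i => (zp i : ℝ))
        = fun i => Qm⁻¹ * x (Sum.inl i) := by
      funext i
      rw [Pi.add_apply, hxinl,
        show Qm⁻¹ * (Qm * ((zp i : ℝ) + ∑ j, α i j * (zq j : ℝ)))
          = (Qm⁻¹ * Qm) * ((zp i : ℝ) + ∑ j, α i j * (zq j : ℝ)) by ring,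
        inv_mul_cancel₀ hQm0.ne', one_mul]
      simp [Matrix.mulVec, dotProduct]
      ring
    rw [heq, euclNorm_mul_left, abs_of_pos (inv_pos.mpr hQm0)]
    have hnorm1 : euclNorm (fun i => x (Sum.inl i)) ≤ ε₁ / 2 := by
      refine le_trans (Real.sqrt_le_sqrt ?_) hxnorm
      rw [Fintype.sum_sum_type]
      exact le_add_of_nonneg_right (Finset.sum_nonneg fun _ _ => sq_nonneg _)
    calc Qm⁻¹ * euclNorm (fun i => x (Sum.inl i)) ≤ Qm⁻¹ * (ε₁/2) :=
        mul_le_mul_of_nonneg_left hnorm1 (inv_pos.mpr hQm0).le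
    _ = (ε₁/2) * Q ^ (-(n:ℝ)/(m:ℝ)) := by
        rw [show (-(n:ℝ)/(m:ℝ)) = -na by rw [hna, neg_div], Real.rpow_neg hQ0.le, hQm]
        ring
  · exact lt_of_lt_of_le one_pos (one_le_euclNorm_int hzq0)
  · have heq : (fun j => (zq j : ℝ)) = fun j => Q * x (Sum.inr j) := by
      funext j
      rw [hxinr, show Q * (Q⁻¹ * (zq j : ℝ)) = (Q * Q⁻¹) * (zq j : ℝ) by ring,
        mul_inv_cancel₀ hQ0.ne', one_mul]
    rw [heq, euclNorm_mul_left, abs_of_pos hQ0]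
    have hnorm2 : euclNorm (fun j => x (Sum.inr j)) ≤ ε₁ / 2 := by
      refine le_trans (Real.sqrt_le_sqrt ?_) hxnorm
      rw [Fintype.sum_sum_type]
      exact le_add_of_nonneg_left (Finset.sum_nonneg fun _ _ => sq_nonneg _)
    calc Q * euclNorm (fun j => x (Sum.inr j)) ≤ Q * (ε₁/2) :=
        mul_le_mul_of_nonneg_left hnorm2 hQ0.le
    _ ≤ Q * 1 := mul_le_mul_of_nonneg_left (by linarith) hQ0.le
    _ = Q := mul_one Q

theorem stmt_10 (m n : ℕ) (hm : 0 < m) (hn : 0 < n) (α : Matrix (Fin m) (Fin n) ℝ)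
    -- `α` is nonsingular in the Diophantine sense
    (hns : ¬ (∀ ε : ℝ, 0 < ε → ∃ Qe : ℝ, 1 ≤ Qe ∧ ∀ Q : ℝ, Qe ≤ Q →
      ∃ (p : Fin m → ℤ) (q : Fin n → ℤ),
        euclNorm (α.mulVec (fun j => (q j : ℝ)) + (fun i => (p i : ℝ))) ≤
          ε * Q ^ (-(n : ℝ) / (m : ℝ)) ∧
        0 < euclNorm (fun j => (q j : ℝ)) ∧ euclNorm (fun j => (q j : ℝ)) ≤ Q))
    (C₁ : ℝ) (hC₁ : 1 ≤ C₁) :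
    -- then for some `ε > 0`, for infinitely many `Q = 2^k`, the only point of the
    -- dual lattice `Λ_Q* ∋ (Q^{-n/m} p, Q(q - αᵀp))` in the box
    -- `‖·‖ ≤ 2ε` × `‖·‖ ≤ 2C₁` is the origin.
    ∃ ε : ℝ, 0 < ε ∧ ∀ N : ℕ, ∃ k : ℕ, N ≤ k ∧
      ∀ (p : Fin m → ℤ) (q : Fin n → ℤ),
        euclNorm (fun i => ((2 : ℝ) ^ k) ^ (-(n : ℝ) / (m : ℝ)) * (p i : ℝ)) ≤ 2 * ε →
        euclNorm (fun j => (2 : ℝ) ^ k *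
            ((q j : ℝ) - α.transpose.mulVec (fun i => (p i : ℝ)) j)) ≤ 2 * C₁ →
        p = 0 ∧ q = 0 := by
  push_neg at hns
  obtain ⟨ε₀, hε₀, H⟩ := hns
  -- constants
  set na : ℝ := (n:ℝ)/(m:ℝ) with hna
  have hm' : (0:ℝ) < m := by exact_mod_cast hm
  have hn' : (0:ℝ) < n := by exact_mod_cast hn
  have hna0 : 0 < na := div_pos hn' hm'
  set ε₁ : ℝ := min ε₀ (1/2) with hε₁def
  have hε₁ : 0 < ε₁ := lt_min hε₀ (by norm_num)
  have hε₁le : ε₁ ≤ ε₀ := min_le_left _ _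
  have hε₁half : ε₁ ≤ 1/2 := min_le_right _ _
  set δ : ℝ := (2 * (ε₁ / (2 * Real.sqrt (m+n))))^(m+n-1) / 2^(m+n+1) with hδdef
  have hsd : 0 < Real.sqrt (m+n) := Real.sqrt_pos.mpr (by positivity)
  have hδ : 0 < δ := by
    apply div_pos _ (by positivity)
    apply pow_pos
    positivity
  set T : ℝ := max 1 (4*C₁/δ) with hTdef
  have hT1 : (1:ℝ) ≤ T := le_max_left _ _
  have hT0 : (0:ℝ) < T := lt_of_lt_of_le one_pos hT1
  have hTC : 4*C₁/δ ≤ T := le_max_right _ _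
  have h2T : (0:ℝ) < (2*T) ^ na := Real.rpow_pos_of_pos (by linarith) _
  refine ⟨δ / (4 * (2*T) ^ na), by positivity, ?_⟩
  intro N
  set Qe : ℝ := max ((2:ℝ)^N) (4*C₁) with hQedef
  have hQe1 : (1:ℝ) ≤ Qe := le_trans (one_le_pow₀ (by norm_num)) (le_max_left _ _)
  obtain ⟨Q, hQQe, hQbad⟩ := H Qe hQe1
  have hQ1 : (1:ℝ) ≤ Q := hQe1.trans hQQe
  have hQ0 : (0:ℝ) < Q := lt_of_lt_of_le one_pos hQ1
  have hQC : 4*C₁ ≤ Q := le_trans (le_max_right _ _) hQQe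
  have hTQ1 : (1:ℝ) ≤ T*Q := one_le_mul_of_one_le_of_one_le hT1 hQ1
  have hTQ0 : (0:ℝ) < T*Q := lt_of_lt_of_le one_pos hTQ1
  set k : ℕ := ⌈Real.logb 2 (T*Q)⌉₊ with hkdef
  have hlogb0 : 0 ≤ Real.logb 2 (T*Q) := Real.logb_nonneg (by norm_num) hTQ1
  have h2k_low : T*Q ≤ (2:ℝ)^k := by
    have h1 : Real.logb 2 (T*Q) ≤ (k:ℝ) := Nat.le_ceil _
    calc T*Q = (2:ℝ) ^ Real.logb 2 (T*Q) := (Real.rpow_logb (by norm_num) (by norm_num) hTQ0).symm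
    _ ≤ (2:ℝ) ^ (k:ℝ) := Real.rpow_le_rpow_left_iff (by norm_num) |>.mpr h1
    _ = (2:ℝ)^k := by rw [Real.rpow_natCast]
  have h2k_up : (2:ℝ)^k ≤ 2*(T*Q) := by
    have h1 : (k:ℝ) ≤ Real.logb 2 (T*Q) + 1 := by
      have := Nat.ceil_lt_add_one hlogb0
      exact le_of_lt (by exact_mod_cast this)
    calc (2:ℝ)^k = (2:ℝ) ^ (k:ℝ) := by rw [Real.rpow_natCast]
    _ ≤ (2:ℝ) ^ (Real.logb 2 (T*Q) + 1) := Real.rpow_le_rpow_left_iff (by norm_num) |>.mpr h1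
    _ = 2*(T*Q) := by
        rw [Real.rpow_add (by norm_num), Real.rpow_logb (by norm_num) (by norm_num) hTQ0]
        ring
  have h2k0 : (0:ℝ) < (2:ℝ)^k := by positivity
  have hkN : N ≤ k := by
    have h2 : (2:ℝ)^N ≤ (2:ℝ)^k := by
      calc (2:ℝ)^N ≤ Qe := le_max_left _ _
      _ ≤ Q := hQQe
      _ ≤ T*Q := le_mul_of_one_le_left hQ0.le hT1
      _ ≤ (2:ℝ)^k := h2k_low
    exact (pow_le_pow_iff_right₀ (by norm_num)).mp h2
  refine ⟨k, hkN, ?_⟩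
  intro p q h1 h2
  by_contra hne
  rcases eq_or_ne p 0 with hp | hp
  · -- p = 0 case
    have hq : q ≠ 0 := fun hq => hne ⟨hp, hq⟩
    subst hp
    have hz : (fun i => ((0 : Fin m → ℤ) i : ℝ)) = (0 : Fin m → ℝ) := by
      funext i; simp
    rw [hz, Matrix.mulVec_zero] at h2
    have h2' : euclNorm (fun j => (2:ℝ)^k * (q j : ℝ)) ≤ 2*C₁ := by
      convert h2 using 2 with j
      simp
    rw [euclNorm_mul_left] at h2'
    have hge : (1:ℝ) ≤ euclNorm (fun j => (q j:ℝ)) := one_le_euclNorm_int hq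
    have : (2:ℝ)^k ≤ 2*C₁ := by
      calc (2:ℝ)^k = |(2:ℝ)^k| * 1 := by rw [abs_of_pos h2k0, mul_one]
      _ ≤ |(2:ℝ)^k| * euclNorm (fun j => (q j:ℝ)) := by
          apply mul_le_mul_of_nonneg_left hge (abs_nonneg _)
      _ ≤ 2*C₁ := h2'
    have : (4:ℝ)*C₁ ≤ 2*C₁ := le_trans (hQC.trans (le_trans (le_mul_of_one_le_left hQ0.le hT1) h2k_low)) this
    nlinarith
  · -- p ≠ 0 case : apply mink_step at scale Q
    set s : ℝ := (2:ℝ)^k / Q with hsdef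
    have hs_lo : T ≤ s := by
      rw [hsdef, le_div_iff₀ hQ0]; exact h2k_low
    have hs_hi : s ≤ 2*T := by
      rw [hsdef, div_le_iff₀ hQ0]; calc (2:ℝ)^k ≤ 2*(T*Q) := h2k_up
      _ = 2*T*Q := by ring
    have hs0 : (0:ℝ) < s := lt_of_lt_of_le hT0 hs_lo
    -- first block bound
    have hQmne : Q ^ na ≠ 0 := (Real.rpow_pos_of_pos hQ0 _).ne'
    have h2kna : ((2:ℝ)^k) ^ na ≠ 0 := (Real.rpow_pos_of_pos h2k0 _).ne'
    have hsplit : (Q ^ na)⁻¹ = s ^ na * (((2:ℝ)^k) ^ (-(n:ℝ)/(m:ℝ))) := by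
      have hneg : (-(n:ℝ)/(m:ℝ)) = -na := by rw [hna, neg_div]
      rw [hneg, Real.rpow_neg h2k0.le, hsdef, Real.div_rpow h2k0.le hQ0.le]
      field_simp
    have h1' : euclNorm (fun i => (Q ^ na)⁻¹ * (p i : ℝ)) ≤ δ/2 := by
      have he : (fun i => (Q ^ na)⁻¹ * (p i : ℝ))
          = fun i => s ^ na * ((((2:ℝ)^k) ^ (-(n:ℝ)/(m:ℝ))) * (p i : ℝ)) := by
        funext i; rw [hsplit]; ring
      rw [he, euclNorm_mul_left, abs_of_pos (Real.rpow_pos_of_pos hs0 _)]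
      have hmono : s ^ na ≤ (2*T) ^ na := Real.rpow_le_rpow hs0.le hs_hi hna0.le
      calc s ^ na * euclNorm (fun i => (((2:ℝ)^k) ^ (-(n:ℝ)/(m:ℝ))) * (p i : ℝ))
          ≤ (2*T) ^ na * (2 * (δ / (4 * (2*T) ^ na))) :=
            mul_le_mul hmono h1 (euclNorm_nonneg _) h2T.le
      _ = δ/2 := by field_simp; ring
    have h2' : euclNorm (fun j => Q * ((q j : ℝ) - α.transpose.mulVec (fun i => (p i : ℝ)) j))
        ≤ δ/2 := by
      have he : (fun j => Q * ((q j : ℝ) - α.transpose.mulVec (fun i => (p i : ℝ)) j))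
          = fun j => s⁻¹ * ((2:ℝ)^k * ((q j : ℝ) - α.transpose.mulVec (fun i => (p i : ℝ)) j)) := by
        funext j; rw [hsdef]; field_simp
      rw [he, euclNorm_mul_left, abs_of_pos (inv_pos.mpr hs0)]
      have hmono : s⁻¹ ≤ T⁻¹ := inv_anti₀ hT0 hs_lo
      calc s⁻¹ * euclNorm (fun j => (2:ℝ)^k * ((q j : ℝ) - α.transpose.mulVec (fun i => (p i : ℝ)) j))
          ≤ T⁻¹ * (2*C₁) := mul_le_mul hmono h2 (euclNorm_nonneg _) (inv_pos.mpr hT0).le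
      _ ≤ δ/2 := by
          rw [inv_mul_le_iff₀ hT0]
          calc 2*C₁ = (4*C₁/δ) * (δ/2) := by field_simp; ring
          _ ≤ T * (δ/2) := mul_le_mul_of_nonneg_right hTC (by positivity)
    obtain ⟨p', q', hA, hB, hC⟩ := mink_step m n hm hn α ε₁ Q hε₁ hε₁half hQ1 p q hp (by
      have hfin : euclNorm (fun i => (Q ^ ((n:ℝ)/(m:ℝ)))⁻¹ * (p i : ℝ)) +
          euclNorm (fun j => Q * ((q j : ℝ) - α.transpose.mulVec (fun i => (p i : ℝ)) j)) ≤ δ := by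
        calc _ ≤ δ/2 + δ/2 := add_le_add h1' h2'
        _ = δ := by ring
      exact le_trans hfin (le_of_eq hδdef))
    have hA' : euclNorm (α.mulVec (fun j => (q' j : ℝ)) + fun i => (p' i : ℝ)) ≤
        ε₀ * Q ^ (-(n:ℝ)/(m:ℝ)) := by
      refine le_trans hA (mul_le_mul_of_nonneg_right (by linarith) ?_)
      exact (Real.rpow_pos_of_pos hQ0 _).le
    have hlt := hQbad p' q' hA' hB
    exact absurd hC (not_le.mpr hlt)
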